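/- Let X ⊆ R^{n_x} and Y ⊆ R^{n_y} be nonempty compact convex sets and set Z = X × Y, with ‖z − z'‖ ≤ D for all z, z' ∈ Z. Let f : R^{n_x} × R^{n_y} → R be differentiable, convex in x for each fixed y and concave in y for each fixed x, and let the operator F(x,y) = (∇_x f(x,y), −∇_y f(x,y)) be L-Lipschitz. Let 0 < γ ≤ 1/(4L) and run the extragradient iteration z^{k+1/2} = proj_Z(z^k − γ F(z^k)), z^{k+1} = proj_Z(z^k − γ F(z^{k+1/2})) from z^0 ∈ Z, and set z̄_avg^{K+1} = (1/(K+1)) Σ_{k=0}^{K} z^{k+1/2} = (x̄, ȳ). Then gap(z̄_avg^{K+1}) := max_{y'∈Y} f(x̄, y') − min_{x'∈X} f(x', ȳ) ≤ D² / (2γ(K+1)). -/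

import Mathlib

open scoped RealInnerProductSpace

section Helpers
variable {E : Type*} [NormedAddCommGroup E] [InnerProductSpace ℝ E]

lemma proj_vi {Z : Set E} (hZcx : Convex ℝ Z) {v w : E} (hw : w ∈ Z)
    (hmin : ∀ u ∈ Z, ‖v - w‖ ≤ ‖v - u‖) : ∀ u ∈ Z, ⟪v - w, u - w⟫ ≤ 0 := by
  rw [← norm_eq_iInf_iff_real_inner_le_zero hZcx hw]
  haveI : Nonempty Z := ⟨⟨w, hw⟩⟩
  refine le_antisymm (le_ciInf fun u => hmin u u.2) ?_
  have hbdd : BddBelow (Set.range fun u : Z => ‖v - (u : E)‖) :=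
    ⟨0, fun r hr => by obtain ⟨u, rfl⟩ := hr; exact norm_nonneg _⟩
  exact ciInf_le hbdd (⟨w, hw⟩ : Z)

variable [CompleteSpace E]

lemma gradient_neg' {g : E → ℝ} {x : E} (hg : DifferentiableAt ℝ g x) :
    gradient (fun y => -g y) x = -gradient g x := by
  have h2 : HasGradientAt (fun y => -g y) (-gradient g x) x := by
    rw [hasGradientAt_iff_hasFDerivAt, map_neg]
    exact hg.hasGradientAt.hasFDerivAt.neg
  exact h2.gradient

lemma grad_ineq {s : Set E} {g : E → ℝ} (hg : ConvexOn ℝ s g) (hd : Differentiable ℝ g)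
    {x y : E} (hx : x ∈ s) (hy : y ∈ s) : g x + ⟪gradient g x, y - x⟫ ≤ g y := by
  set φ : ℝ → ℝ := fun t => g (x + t • (y - x)) with hφdef
  have hc : HasDerivAt (fun t : ℝ => x + t • (y - x)) (y - x) 0 := by
    simpa using ((hasDerivAt_id (0:ℝ)).smul_const (y - x)).const_add x
  have hgfd : HasFDerivAt g (InnerProductSpace.toDual ℝ E (gradient g x)) x :=
    (hd x).hasGradientAt.hasFDerivAt
  have hφ : HasDerivAt φ ⟪gradient g x, y - x⟫ 0 := by
    have hgfd' : HasFDerivAt g (InnerProductSpace.toDual ℝ E (gradient g x))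
        (x + (0:ℝ) • (y - x)) := by simpa using hgfd
    have := hgfd'.comp_hasDerivAt 0 hc
    simpa [φ, Function.comp_def, InnerProductSpace.toDual_apply_apply] using this
  have hslope : Filter.Tendsto (slope φ 0) (nhdsWithin 0 (Set.Ioi 0)) (nhds ⟪gradient g x, y - x⟫) :=
    (hasDerivAt_iff_tendsto_slope.mp hφ).mono_left
      (nhdsWithin_mono _ (by intro t ht; exact ne_of_gt ht))
  have hbound : ∀ t ∈ Set.Ioc (0:ℝ) 1, slope φ 0 t ≤ g y - g x := by
    intro t ht
    have hcomb : φ t ≤ (1 - t) * g x + t * g y := by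
      have h1 : x + t • (y - x) = (1 - t) • x + t • y := by
        rw [smul_sub, sub_smul, one_smul]; abel
      rw [hφdef]; dsimp only; rw [h1]
      exact hg.2 hx hy (by linarith [ht.2]) (le_of_lt ht.1) (by ring)
    have : φ 0 = g x := by simp [φ]
    rw [slope_def_field, sub_zero, div_le_iff₀ ht.1]
    nlinarith [ht.1]
  have : ⟪gradient g x, y - x⟫ ≤ g y - g x := by
    refine le_of_tendsto hslope ?_
    filter_upwards [Ioc_mem_nhdsGT_of_mem ⟨le_refl (0:ℝ), zero_lt_one⟩] with t ht
    exact hbound t ht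
  linarith

end Helpers

section Step
variable {E : Type*} [NormedAddCommGroup E] [InnerProductSpace ℝ E]

lemma eg_step {Z : Set E} {Fo : E → E} {L γ : ℝ}
    (hlip : ∀ z1 z2, ‖Fo z1 - Fo z2‖ ≤ L * ‖z1 - z2‖) (hγ0 : 0 < γ) (hγL : γ * L ≤ 1/4)
    {a b c u : E} (hu : u ∈ Z) (hcZ : c ∈ Z)
    (hb : ∀ w ∈ Z, ⟪a - γ • Fo a - b, w - b⟫ ≤ 0)
    (hc : ∀ w ∈ Z, ⟪a - γ • Fo b - c, w - c⟫ ≤ 0) :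
    γ * ⟪Fo b, b - u⟫ ≤ 1/2 * ‖a - u‖^2 - 1/2 * ‖c - u‖^2 := by
  have i1' : γ * ⟪Fo a, b - c⟫ ≤ ⟪a - b, b - c⟫ := by
    have h := hb c hcZ
    rw [show a - γ • Fo a - b = (a - b) - γ • Fo a from by abel,
      show c - b = -(b - c) from by abel, inner_sub_left, real_inner_smul_left,
      inner_neg_right, inner_neg_right] at h
    linarith
  have i2' : γ * ⟪Fo b, c - u⟫ ≤ ⟪a - c, c - u⟫ := by
    have h := hc u hu
    rw [show a - γ • Fo b - c = (a - c) - γ • Fo b from by abel,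
      show u - c = -(c - u) from by abel, inner_sub_left, real_inner_smul_left,
      inner_neg_right, inner_neg_right] at h
    linarith
  have key3 : γ * ⟪Fo b - Fo a, b - c⟫ ≤ 1/8 * ‖a - b‖^2 + 1/8 * ‖b - c‖^2 := by
    have hcs := real_inner_le_norm (Fo b - Fo a) (b - c)
    have h2 := hlip b a
    rw [norm_sub_rev b a] at h2
    have hγL' : 0 ≤ γ := hγ0.le
    have h1 : γ * ⟪Fo b - Fo a, b - c⟫ ≤ γ * L * ‖a - b‖ * ‖b - c‖ := by
      have ha : ⟪Fo b - Fo a, b - c⟫ ≤ L * ‖a - b‖ * ‖b - c‖ :=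
        le_trans hcs (mul_le_mul_of_nonneg_right h2 (norm_nonneg _))
      calc γ * ⟪Fo b - Fo a, b - c⟫ ≤ γ * (L * ‖a - b‖ * ‖b - c‖) :=
            mul_le_mul_of_nonneg_left ha hγL'
        _ = γ * L * ‖a - b‖ * ‖b - c‖ := by ring
    have h3 : γ * L * ‖a - b‖ * ‖b - c‖ ≤ 1/4 * (‖a - b‖ * ‖b - c‖) := by
      nlinarith [norm_nonneg (a - b), norm_nonneg (b - c),
        mul_nonneg (norm_nonneg (a - b)) (norm_nonneg (b - c))]
    nlinarith [sq_nonneg (‖a - b‖ - ‖b - c‖)]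
  have split : γ * ⟪Fo b, b - u⟫ =
      γ * ⟪Fo b, c - u⟫ + γ * ⟪Fo a, b - c⟫ + γ * ⟪Fo b - Fo a, b - c⟫ := by
    rw [inner_sub_left]
    rw [show b - u = (c - u) + (b - c) from by abel, inner_add_right]
    ring
  have n1 : ‖a - u‖^2 = ‖a - c‖^2 + 2 * ⟪a - c, c - u⟫ + ‖c - u‖^2 := by
    have := norm_add_sq_real (a - c) (c - u)
    rwa [sub_add_sub_cancel] at this
  have n2 : ‖a - c‖^2 = ‖a - b‖^2 + 2 * ⟪a - b, b - c⟫ + ‖b - c‖^2 := by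
    have := norm_add_sq_real (a - b) (b - c)
    rwa [sub_add_sub_cancel] at this
  nlinarith [sq_nonneg ‖a - b‖, sq_nonneg ‖b - c‖]

end Step



/-- The saddle-point operator `F(x,y) = (∇_x f(x,y), −∇_y f(x,y))` on the ℓ₂-product
space `Z = X × Y`. -/
noncomputable def saddleOp (nx ny : ℕ)
    (f : EuclideanSpace ℝ (Fin nx) → EuclideanSpace ℝ (Fin ny) → ℝ) :
    WithLp 2 (EuclideanSpace ℝ (Fin nx) × EuclideanSpace ℝ (Fin ny)) →
      WithLp 2 (EuclideanSpace ℝ (Fin nx) × EuclideanSpace ℝ (Fin ny)) :=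
  fun z =>
    (WithLp.equiv 2 _).symm
      (gradient (fun x => f x (WithLp.equiv 2 _ z).2) (WithLp.equiv 2 _ z).1,
        -gradient (fun y => f (WithLp.equiv 2 _ z).1 y) (WithLp.equiv 2 _ z).2)

/-- on a compact convex product domain `Z = X × Y` of diameter at most `D`,
for a differentiable convex-concave `f` whose saddle-point operator `F` is `L`-Lipschitz,
the averaged extragradient iterates satisfy
`gap(z̄_avg^{K+1}) ≤ D²/(2γ(K+1))`. -/
theorem extragradient_gap_convergence
    (nx ny : ℕ) (X : Set (EuclideanSpace ℝ (Fin nx))) (Y : Set (EuclideanSpace ℝ (Fin ny)))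
    (hXne : X.Nonempty) (hXcp : IsCompact X) (hXcx : Convex ℝ X)
    (hYne : Y.Nonempty) (hYcp : IsCompact Y) (hYcx : Convex ℝ Y)
    (Z : Set (WithLp 2 (EuclideanSpace ℝ (Fin nx) × EuclideanSpace ℝ (Fin ny))))
    (hZ : Z = {z | (WithLp.equiv 2 _ z).1 ∈ X ∧ (WithLp.equiv 2 _ z).2 ∈ Y})
    (D : ℝ) (hD : ∀ z ∈ Z, ∀ z' ∈ Z, ‖z - z'‖ ≤ D)
    (f : EuclideanSpace ℝ (Fin nx) → EuclideanSpace ℝ (Fin ny) → ℝ)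
    (hdiff : Differentiable ℝ (fun p : EuclideanSpace ℝ (Fin nx) × EuclideanSpace ℝ (Fin ny) => f p.1 p.2))
    (hcvx : ∀ y ∈ Y, ConvexOn ℝ X (fun x => f x y))
    (hccv : ∀ x ∈ X, ConcaveOn ℝ Y (fun y => f x y))
    (L γ : ℝ) (hL : 0 < L)
    (hlip : ∀ z1 z2, ‖saddleOp nx ny f z1 - saddleOp nx ny f z2‖ ≤ L * ‖z1 - z2‖)
    (hγ0 : 0 < γ) (hγ : γ ≤ 1 / (4 * L))
    -- `P` is the Euclidean projection onto `Z`
    (P : WithLp 2 (EuclideanSpace ℝ (Fin nx) × EuclideanSpace ℝ (Fin ny)) →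
      WithLp 2 (EuclideanSpace ℝ (Fin nx) × EuclideanSpace ℝ (Fin ny)))
    (hP : ∀ v, P v ∈ Z ∧ ∀ w ∈ Z, ‖v - P v‖ ≤ ‖v - w‖)
    -- the extragradient iterates: `zh k = z^{k+1/2}`
    (z zh : ℕ → WithLp 2 (EuclideanSpace ℝ (Fin nx) × EuclideanSpace ℝ (Fin ny)))
    (hz0 : z 0 ∈ Z)
    (hstep1 : ∀ k, zh k = P (z k - γ • saddleOp nx ny f (z k)))
    (hstep2 : ∀ k, z (k + 1) = P (z k - γ • saddleOp nx ny f (zh k)))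
    (K : ℕ)
    -- the ergodic average `z̄_avg^{K+1} = (x̄, ȳ)`
    (zavg : WithLp 2 (EuclideanSpace ℝ (Fin nx) × EuclideanSpace ℝ (Fin ny)))
    (havg : zavg = ((K : ℝ) + 1)⁻¹ • ∑ k ∈ Finset.range (K + 1), zh k) :
    sSup ((fun y' => f (WithLp.equiv 2 _ zavg).1 y') '' Y) -
        sInf ((fun x' => f x' (WithLp.equiv 2 _ zavg).2) '' X) ≤
      D ^ 2 / (2 * γ * ((K : ℝ) + 1)) := by
  classical
  set Fo := saddleOp nx ny f with hFo
  set eqv := WithLp.equiv 2 (EuclideanSpace ℝ (Fin nx) × EuclideanSpace ℝ (Fin ny)) with heqv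
  -- convexity of Z
  have hZcx : Convex ℝ Z := by
    rw [hZ]
    intro p hp q hq α β hα hβ hαβ
    refine ⟨?_, ?_⟩
    · simpa [heqv, WithLp.equiv_apply, WithLp.ofLp_add, WithLp.ofLp_smul] using hXcx hp.1 hq.1 hα hβ hαβ
    · simpa [heqv, WithLp.equiv_apply, WithLp.ofLp_add, WithLp.ofLp_smul] using hYcx hp.2 hq.2 hα hβ hαβ
  have hzhZ : ∀ k, zh k ∈ Z := fun k => by rw [hstep1]; exact (hP _).1
  have hzZ : ∀ k, z k ∈ Z := by
    intro k
    cases k with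
    | zero => exact hz0
    | succ k => rw [hstep2]; exact (hP _).1
  have hD0 : 0 ≤ D := by simpa using hD (z 0) hz0 (z 0) hz0
  have hγL : γ * L ≤ 1 / 4 := by
    have h4L : (0:ℝ) < 4 * L := by linarith
    calc γ * L ≤ (1 / (4 * L)) * L := mul_le_mul_of_nonneg_right hγ hL.le
      _ = 1 / 4 := by field_simp
  -- variational inequalities
  have hVI1 : ∀ k, ∀ w ∈ Z, ⟪z k - γ • Fo (z k) - zh k, w - zh k⟫ ≤ 0 := by
    intro k
    refine proj_vi hZcx (hzhZ k) ?_
    intro u hu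
    have h := (hP (z k - γ • Fo (z k))).2 u hu
    rwa [← hstep1 k] at h
  have hVI2 : ∀ k, ∀ w ∈ Z, ⟪z k - γ • Fo (zh k) - z (k+1), w - z (k+1)⟫ ≤ 0 := by
    intro k
    refine proj_vi hZcx (hzZ (k+1)) ?_
    intro u hu
    have h := (hP (z k - γ • Fo (zh k))).2 u hu
    rwa [← hstep2 k] at h
  -- per-step and summed estimate
  have hsum : ∀ u ∈ Z, ∑ k ∈ Finset.range (K+1), ⟪Fo (zh k), zh k - u⟫ ≤ D^2 / (2*γ) := by
    intro u hu
    have hstep : ∀ k, γ * ⟪Fo (zh k), zh k - u⟫ ≤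
        1/2 * ‖z k - u‖^2 - 1/2 * ‖z (k+1) - u‖^2 := fun k =>
      eg_step hlip hγ0 hγL hu (hzZ (k+1)) (hVI1 k) (hVI2 k)
    have htel : ∑ k ∈ Finset.range (K+1),
        (1/2 * ‖z k - u‖^2 - 1/2 * ‖z (k+1) - u‖^2) =
        1/2 * ‖z 0 - u‖^2 - 1/2 * ‖z (K+1) - u‖^2 :=
      Finset.sum_range_sub' (fun k => 1/2 * ‖z k - u‖^2) (K+1)
    have hsum1 : γ * ∑ k ∈ Finset.range (K+1), ⟪Fo (zh k), zh k - u⟫ ≤ 1/2 * D^2 := by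
      rw [Finset.mul_sum]
      calc ∑ k ∈ Finset.range (K+1), γ * ⟪Fo (zh k), zh k - u⟫
          ≤ ∑ k ∈ Finset.range (K+1), (1/2 * ‖z k - u‖^2 - 1/2 * ‖z (k+1) - u‖^2) := by
            exact Finset.sum_le_sum fun k _ => hstep k
        _ = 1/2 * ‖z 0 - u‖^2 - 1/2 * ‖z (K+1) - u‖^2 := htel
        _ ≤ 1/2 * D^2 := by
            have h1 : ‖z 0 - u‖ ≤ D := hD (z 0) hz0 u hu
            have h2 : ‖z 0 - u‖^2 ≤ D^2 := by nlinarith [norm_nonneg (z 0 - u)]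
            nlinarith [sq_nonneg ‖z (K+1) - u‖]
    rw [le_div_iff₀ (by positivity : (0:ℝ) < 2*γ)]
    linarith
  -- differentiability of partial maps
  have hdx : ∀ yy, Differentiable ℝ (fun xx => f xx yy) := fun yy =>
    hdiff.comp (differentiable_id.prodMk (differentiable_const yy))
  have hdy : ∀ xx, Differentiable ℝ (fun yy => f xx yy) := fun xx =>
    hdiff.comp ((differentiable_const xx).prodMk differentiable_id)
  -- membership of test points
  have huZ : ∀ x' ∈ X, ∀ y' ∈ Y, eqv.symm (x', y') ∈ Z := by
    intro x' hx' y' hy'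
    rw [hZ]
    refine ⟨?_, ?_⟩ <;> simp only [Equiv.apply_symm_apply] <;> assumption
  -- per-index gap bound via convexity/concavity
  have hkey : ∀ x' ∈ X, ∀ y' ∈ Y, ∀ k : ℕ,
      f (eqv (zh k)).1 y' - f x' (eqv (zh k)).2 ≤
        ⟪Fo (zh k), zh k - eqv.symm (x', y')⟫ := by
    intro x' hx' y' hy' k
    obtain ⟨hxk, hyk⟩ : (eqv (zh k)).1 ∈ X ∧ (eqv (zh k)).2 ∈ Y := by
      have := hzhZ k; rwa [hZ] at this
    set xk := (eqv (zh k)).1 with hxkdef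
    set yk := (eqv (zh k)).2 with hykdef
    have hinner : ⟪Fo (zh k), zh k - eqv.symm (x', y')⟫ =
        ⟪gradient (fun xx => f xx yk) xk, xk - x'⟫ +
        ⟪-gradient (fun yy => f xk yy) yk, yk - y'⟫ := rfl
    have h1 := grad_ineq (hcvx yk hyk) (hdx yk) hxk hx'
    have hccv' : ConvexOn ℝ Y (fun yy => -f xk yy) := by
      exact (hccv xk hxk).neg
    have h2 := grad_ineq hccv' ((hdy xk).neg) hyk hy'
    rw [gradient_neg' ((hdy xk) yk)] at h2
    rw [hinner]
    have e1 : ⟪gradient (fun xx => f xx yk) xk, xk - x'⟫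
        = -⟪gradient (fun xx => f xx yk) xk, x' - xk⟫ := by
      rw [← inner_neg_right, neg_sub]
    have e2 : ⟪-gradient (fun yy => f xk yy) yk, yk - y'⟫
        = -⟪-gradient (fun yy => f xk yy) yk, y' - yk⟫ := by
      rw [← inner_neg_right, neg_sub]
    rw [e1, e2]
    linarith
  -- ergodic average components
  have heqsum : eqv (∑ k ∈ Finset.range (K+1), zh k) =
      ∑ k ∈ Finset.range (K+1), eqv (zh k) :=
    map_sum (WithLp.linearEquiv 2 ℝ (EuclideanSpace ℝ (Fin nx) × EuclideanSpace ℝ (Fin ny)))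
      zh (Finset.range (K+1))
  set N : ℝ := (K : ℝ) + 1 with hN
  have hNpos : (0:ℝ) < N := by positivity
  have hxavg : (eqv zavg).1 = ∑ k ∈ Finset.range (K+1), N⁻¹ • (eqv (zh k)).1 := by
    rw [havg, show ∀ (c : ℝ) (w : WithLp 2 (EuclideanSpace ℝ (Fin nx) × EuclideanSpace ℝ (Fin ny))), eqv (c • w) = c • eqv w from fun _ _ => rfl, heqsum, Finset.smul_sum]
    simp [Prod.fst_sum, Prod.smul_fst]
  have hyavg : (eqv zavg).2 = ∑ k ∈ Finset.range (K+1), N⁻¹ • (eqv (zh k)).2 := by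
    rw [havg, show ∀ (c : ℝ) (w : WithLp 2 (EuclideanSpace ℝ (Fin nx) × EuclideanSpace ℝ (Fin ny))), eqv (c • w) = c • eqv w from fun _ _ => rfl, heqsum, Finset.smul_sum]
    simp [Prod.snd_sum, Prod.smul_snd]
  have hw0 : ∀ i ∈ Finset.range (K+1), (0:ℝ) ≤ N⁻¹ := fun i _ => by positivity
  have hw1 : ∑ _i ∈ Finset.range (K+1), N⁻¹ = (1:ℝ) := by
    rw [Finset.sum_const, Finset.card_range, nsmul_eq_mul]
    push_cast
    rw [hN]
    field_simp
  -- the gap bound for all test points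
  have hgap : ∀ x' ∈ X, ∀ y' ∈ Y,
      f (eqv zavg).1 y' - f x' (eqv zavg).2 ≤ D^2 / (2*γ*N) := by
    intro x' hx' y' hy'
    have hJx : f (eqv zavg).1 y' ≤
        ∑ k ∈ Finset.range (K+1), N⁻¹ • f (eqv (zh k)).1 y' := by
      rw [hxavg]
      exact (hcvx y' hy').map_sum_le hw0 hw1 (fun i _ => by
        have := hzhZ i; rw [hZ] at this; exact this.1)
    have hJy : ∑ k ∈ Finset.range (K+1), N⁻¹ • f x' (eqv (zh k)).2 ≤
        f x' (eqv zavg).2 := by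
      rw [hyavg]
      exact (hccv x' hx').le_map_sum hw0 hw1 (fun i _ => by
        have := hzhZ i; rw [hZ] at this; exact this.2)
    have hSk : ∑ k ∈ Finset.range (K+1),
        (f (eqv (zh k)).1 y' - f x' (eqv (zh k)).2) ≤ D^2/(2*γ) :=
      le_trans (Finset.sum_le_sum fun k _ => hkey x' hx' y' hy' k)
        (hsum (eqv.symm (x', y')) (huZ x' hx' y' hy'))
    have hcomb : f (eqv zavg).1 y' - f x' (eqv zavg).2 ≤
        N⁻¹ * ∑ k ∈ Finset.range (K+1),
          (f (eqv (zh k)).1 y' - f x' (eqv (zh k)).2) := by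
      have heq : ∑ k ∈ Finset.range (K+1), N⁻¹ • f (eqv (zh k)).1 y'
          - ∑ k ∈ Finset.range (K+1), N⁻¹ • f x' (eqv (zh k)).2
          = N⁻¹ * ∑ k ∈ Finset.range (K+1),
            (f (eqv (zh k)).1 y' - f x' (eqv (zh k)).2) := by
        rw [Finset.mul_sum, ← Finset.sum_sub_distrib]
        exact Finset.sum_congr rfl fun k _ => by simp [smul_eq_mul]; ring
      linarith
    calc f (eqv zavg).1 y' - f x' (eqv zavg).2
        ≤ N⁻¹ * ∑ k ∈ Finset.range (K+1),
            (f (eqv (zh k)).1 y' - f x' (eqv (zh k)).2) := hcomb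
      _ ≤ N⁻¹ * (D^2/(2*γ)) := mul_le_mul_of_nonneg_left hSk (by positivity)
      _ = D^2 / (2*γ*N) := by rw [mul_comm, ← div_eq_mul_inv, div_div]
  -- conclude via sSup/sInf
  have hBle : ∀ y' ∈ Y, f (eqv zavg).1 y' ≤ D^2/(2*γ*N) +
      sInf ((fun x' => f x' (eqv zavg).2) '' X) := by
    intro y' hy'
    have hle : ∀ a ∈ (fun x' => f x' (eqv zavg).2) '' X,
        f (eqv zavg).1 y' - D^2/(2*γ*N) ≤ a := by
      rintro a ⟨x', hx', rfl⟩
      have := hgap x' hx' y' hy'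
      linarith
    have := le_csInf (hXne.image _) hle
    linarith
  have hfin : sSup ((fun y' => f (eqv zavg).1 y') '' Y) ≤ D^2/(2*γ*N) +
      sInf ((fun x' => f x' (eqv zavg).2) '' X) := by
    refine csSup_le (hYne.image _) ?_
    rintro a ⟨y', hy', rfl⟩
    exact hBle y' hy'
  rw [hN] at hfin
  linarith
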